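/- Define real functions f_0(x) = e^x and f_{i+1}(x) = exp(f_i(x) − 1) for each integer i ≥ 0. Let M ≥ 1 be an integer and set x = log_e(1 + 1/M). Then for every integer i with 0 ≤ i < M, f_i(x) ≤ 1 + 1/(M − i). -/

import Mathlib

/-- The real functions `f_0(x) = e^x`, `f_{i+1}(x) = exp(f_i(x) − 1)`. -/
noncomputable def fIter : ℕ → ℝ → ℝ
  | 0, x => Real.exp x
  | i + 1, x => Real.exp (fIter i x - 1)

lemma exp_le_inv_one_sub {t : ℝ} (ht : t < 1) : Real.exp t ≤ 1 / (1 - t) := by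
  have h1 : 1 - t ≤ Real.exp (-t) := by
    have := Real.add_one_le_exp (-t); linarith
  have hpos : 0 < 1 - t := by linarith
  rw [le_div_iff₀ hpos]
  calc Real.exp t * (1 - t) ≤ Real.exp t * Real.exp (-t) := by
        exact mul_le_mul_of_nonneg_left h1 (Real.exp_pos t).le
    _ = 1 := by rw [← Real.exp_add]; simp

/-- Let `M ≥ 1` be an integer and `x = log(1 + 1/M)`. Then for every
`0 ≤ i < M`, `f_i(x) ≤ 1 + 1/(M − i)`. -/
theorem fIter_le (M : ℕ) (hM : 1 ≤ M) (i : ℕ) (hi : i < M) :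
    fIter i (Real.log (1 + 1 / M)) ≤ 1 + 1 / ((M : ℝ) - i) := by
  induction i with
  | zero =>
    have hMpos : (0:ℝ) < M := by exact_mod_cast hM
    have hx : (0:ℝ) < 1 + 1 / M := by positivity
    simp only [fIter]
    rw [Real.exp_log hx]
    norm_num
  | succ i ih =>
    have hi' : i < M := Nat.lt_of_succ_lt hi
    have ih' := ih hi'
    have hMi : (2:ℝ) ≤ (M : ℝ) - i := by
      have : i + 2 ≤ M := hi
      have := (Nat.cast_le (α := ℝ)).2 this
      push_cast at this; linarith
    have hMi1 : (1:ℝ) ≤ (M : ℝ) - i - 1 := by linarith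
    have ht : 1 / ((M:ℝ) - i) < 1 := by
      rw [div_lt_one (by linarith)]; linarith
    calc fIter (i+1) (Real.log (1 + 1 / M))
        = Real.exp (fIter i (Real.log (1 + 1 / M)) - 1) := rfl
      _ ≤ Real.exp (1 / ((M:ℝ) - i)) := by
          apply Real.exp_le_exp.2; linarith
      _ ≤ 1 / (1 - 1 / ((M:ℝ) - i)) := exp_le_inv_one_sub ht
      _ ≤ 1 + 1 / ((M : ℝ) - (i+1 : ℕ)) := by
          push_cast
          rw [div_le_iff₀ (by rw [sub_pos]; exact ht)]
          have h1 : (M:ℝ) - i ≠ 0 := by linarith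
          have h2 : (M:ℝ) - i - 1 ≠ 0 := by linarith
          have h3 : (M:ℝ) - (i+1) ≠ 0 := by push_cast; linarith
          have e1 : 1 / ((M:ℝ) - (i+1)) = 1 / ((M:ℝ)-i-1) := by ring_nf
          have e2 : 1 - 1 / ((M:ℝ) - i) = ((M:ℝ)-i-1)/((M:ℝ)-i) := by field_simp
          rw [e1, e2]
          have : (1 + 1 / ((M:ℝ)-i-1)) * (((M:ℝ)-i-1)/((M:ℝ)-i)) = 1 := by
            field_simp
            ring
          linarith
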